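/- arXiv:2405.02209 — 3 statements merged into one kernel-verified Lean document; each statement's English description precedes it below -/
import Mathlib

section
/- Let A ≤ B be a flat extension of integral domains such that the induced extension of fraction fields Frac(A) ≤ Frac(B) is finite and separable. Then the tensor product B ⊗_A B is a reduced ring. -/
open scoped TensorProduct

set_option maxHeartbeats 1000000
set_option synthInstance.maxHeartbeats 400000

/-- Let `A ≤ B` be a flat extension of integral domains such that the induced extension of
fraction fields `Frac(A) ≤ Frac(B)` is finite and separable. Then `B ⊗[A] B` is reduced. -/
theorem flat_domain_tensor_self_isReduced
    (A B : Type*) [CommRing A] [IsDomain A] [CommRing B] [IsDomain B]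
    [Algebra A B] (hinj : Function.Injective (algebraMap A B)) [Module.Flat A B]
    (KA KB : Type*) [Field KA] [Field KB]
    [Algebra A KA] [IsFractionRing A KA]
    [Algebra B KB] [IsFractionRing B KB]
    [Algebra A KB] [IsScalarTower A B KB]
    [Algebra KA KB] [IsScalarTower A KA KB]
    [FiniteDimensional KA KB] [Algebra.IsSeparable KA KB] :
    IsReduced (B ⊗[A] B) := by
  -- Replace `KA` by its image `K'` inside `KB`, to put everything in the same universe.
  set K' : Subfield KB := (algebraMap KA KB).fieldRange with hK'
  let e₁ : KA ≃+* K' := RingEquiv.ofBijective (algebraMap KA KB).rangeRestrictField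
    ⟨fun x y h => (algebraMap KA KB).injective (congrArg Subtype.val h),
      fun y => ⟨y.2.choose, Subtype.ext y.2.choose_spec⟩⟩
  have he₁ : ∀ x : KA, ((e₁ x : K') : KB) = algebraMap KA KB x := fun x => rfl
  have he : (algebraMap K' KB).comp (e₁ : KA →+* K')
      = ((RingEquiv.refl KB : KB ≃+* KB) : KB →+* KB).comp (algebraMap KA KB) :=
    RingHom.ext fun x => rfl
  haveI : Module.Finite K' KB := Module.Finite.of_equiv_equiv e₁ (RingEquiv.refl KB) he
  haveI : Algebra.IsSeparable K' KB := Algebra.IsSeparable.of_equiv_equiv e₁ (RingEquiv.refl KB) he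
  haveI : Algebra.FormallyUnramified K' KB :=
    Algebra.FormallyUnramified.of_isSeparable K' KB
  haveI : IsReduced (KB ⊗[K'] KB) :=
    Algebra.FormallyUnramified.isReduced_of_field KB (KB ⊗[K'] KB)
  -- flatness instances
  haveI : Module.Flat A KA := IsLocalization.flat KA (nonZeroDivisors A)
  haveI : Module.Flat A KB := Module.Flat.trans A KA KB
  -- `A`-algebra structure on `K'`
  letI : Algebra A K' := ((e₁ : KA →+* K').comp (algebraMap A KA)).toAlgebra
  haveI : IsScalarTower A K' KB := IsScalarTower.of_algebraMap_eq fun a =>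
    IsScalarTower.algebraMap_apply A KA KB a
  -- scalar compatibility instances
  haveI cA : TensorProduct.CompatibleSMul A KA KB KB :=
    IsLocalization.tensorProduct_compatibleSMul (nonZeroDivisors A) KA KB KB
  have hsmul : ∀ (k : K') (z : KB), k • z = (e₁.symm k : KA) • z := by
    intro k z
    rw [Algebra.smul_def, Algebra.smul_def]
    congr 1
    have : (e₁ (e₁.symm k) : KB) = algebraMap KA KB (e₁.symm k) := he₁ _
    rw [e₁.apply_symm_apply] at this
    exact this.symm ▸ rfl
  haveI c1 : TensorProduct.CompatibleSMul A K' KB KB := by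
    constructor
    intro k x y
    rw [hsmul, hsmul, TensorProduct.CompatibleSMul.smul_tmul]
  haveI c2 : TensorProduct.CompatibleSMul K' A KB KB := by
    constructor
    intro a x y
    rw [← IsScalarTower.algebraMap_smul K' a x, ← IsScalarTower.algebraMap_smul K' a y,
      ← TensorProduct.smul_tmul', TensorProduct.tmul_smul]
  haveI : SMulCommClass A K' KB := by
    constructor
    intro a k x
    rw [← IsScalarTower.algebraMap_smul K' a (k • x), ← IsScalarTower.algebraMap_smul K' a x,
      smul_smul, smul_smul, mul_comm]
  -- the natural algebra map `B ⊗[A] B →ₐ[A] KB ⊗[K'] KB`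
  let f : B →ₐ[A] KB ⊗[K'] KB :=
    ((Algebra.TensorProduct.includeLeft :
        KB →ₐ[K'] KB ⊗[K'] KB).restrictScalars A).comp (IsScalarTower.toAlgHom A B KB)
  let g : B →ₐ[A] KB ⊗[K'] KB :=
    ((Algebra.TensorProduct.includeRight :
        KB →ₐ[K'] KB ⊗[K'] KB).restrictScalars A).comp (IsScalarTower.toAlgHom A B KB)
  let ψ : B ⊗[A] B →ₐ[A] KB ⊗[K'] KB :=
    Algebra.TensorProduct.lift f g fun _ _ => Commute.all _ _
  -- auxiliary linear maps
  let tKB : B →ₗ[A] KB := (IsScalarTower.toAlgHom A B KB).toLinearMap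
  have htKB : Function.Injective tKB := IsFractionRing.injective B KB
  let e : KB ⊗[K'] KB ≃ₗ[K'] KB ⊗[A] KB :=
    TensorProduct.equivOfCompatibleSMul A K' K' KB KB
  have key : ∀ x : B ⊗[A] B,
      e (ψ x) = (LinearMap.lTensor KB tKB) ((LinearMap.rTensor B tKB) x) := by
    intro x
    induction x with
    | zero => simp only [map_zero]
    | tmul x y =>
        have h1 : ψ (x ⊗ₜ y) = algebraMap B KB x ⊗ₜ[K'] algebraMap B KB y := by
          simp only [ψ, f, g, Algebra.TensorProduct.lift_tmul, AlgHom.comp_apply,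
            AlgHom.coe_restrictScalars', IsScalarTower.coe_toAlgHom',
            Algebra.TensorProduct.includeLeft_apply, Algebra.TensorProduct.includeRight_apply,
            Algebra.TensorProduct.tmul_mul_tmul, one_mul, mul_one]
        rw [h1]
        exact TensorProduct.mapOfCompatibleSMul_tmul _ _ _ _ _ _ _
    | add x y hx hy => simp only [map_add, hx, hy]
  have hψ : Function.Injective ψ := by
    intro x y hxy
    have h1 : Function.Injective (LinearMap.rTensor B tKB) :=
      Module.Flat.rTensor_preserves_injective_linearMap tKB htKB
    have h2 : Function.Injective (LinearMap.lTensor KB tKB) :=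
      Module.Flat.lTensor_preserves_injective_linearMap tKB htKB
    apply h1
    apply h2
    rw [← key x, ← key y, hxy]
  exact isReduced_of_injective ψ.toRingHom hψ
end

section
/- Let K be a topological field of characteristic p > 0 whose topology is Hausdorff and non-discrete. If the set K^p of p-th powers has nonempty interior, then K^p = K, i.e., K is perfect. -/
/-- Let `K` be a topological field of characteristic `p > 0` whose topology is Hausdorff and
non-discrete. If the set of `p`-th powers has nonempty interior, then every element of `K`
is a `p`-th power, i.e. `K` is perfect. -/
theorem perfect_of_pthPowers_nonempty_interior
    (K : Type*) [Field K] [TopologicalSpace K] [IsTopologicalDivisionRing K] [T2Space K]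
    (hnd : ¬ DiscreteTopology K)
    (p : ℕ) (hp : p.Prime) [CharP K p]
    (hint : (interior {x : K | ∃ y : K, y ^ p = x}).Nonempty) :
    ∀ x : K, ∃ y : K, y ^ p = x := by
  haveI := Fact.mk hp
  set S : Set K := {x : K | ∃ y : K, y ^ p = x} with hS
  have hadd : ∀ a ∈ S, ∀ b ∈ S, a + b ∈ S := by
    rintro a ⟨y, rfl⟩ b ⟨z, rfl⟩
    exact ⟨y + z, add_pow_char y z p⟩
  have hmul : ∀ a ∈ S, ∀ b ∈ S, a * b ∈ S := by
    rintro a ⟨y, rfl⟩ b ⟨z, rfl⟩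
    exact ⟨y * z, mul_pow y z p⟩
  have hinv : ∀ a ∈ S, a⁻¹ ∈ S := by
    rintro a ⟨y, rfl⟩
    exact ⟨y⁻¹, by rw [inv_pow]⟩
  intro x
  rcases eq_or_ne x 0 with rfl | hx
  · exact ⟨0, by simp [hp.pos.ne']⟩
  obtain ⟨u, hu⟩ := hint
  have huS : u ∈ S := interior_subset hu
  set V : Set K := (fun z => z + u) ⁻¹' (interior S) with hV
  have hVopen : IsOpen V := isOpen_interior.preimage (by continuity)
  have hV0 : (0 : K) ∈ V := by simpa [hV] using hu
  have hVS : V ⊆ S := by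
    intro z hz
    obtain ⟨y, hy⟩ := huS
    obtain ⟨w, hw⟩ : z + u ∈ S := interior_subset hz
    exact ⟨w - y, by rw [sub_pow_char, hw, hy]; ring⟩
  set W : Set K := V ∩ (fun z => x⁻¹ * z) ⁻¹' V with hW
  have hWopen : IsOpen W := hVopen.inter (hVopen.preimage (by continuity))
  have hW0 : (0 : K) ∈ W := ⟨hV0, by simpa [hW] using hV0⟩
  have : ∃ b ∈ W, b ≠ 0 := by
    by_contra h
    push_neg at h
    apply hnd
    refine discreteTopology_iff_isOpen_singleton_zero.mpr ?_
    have : W = {0} := Set.eq_singleton_iff_unique_mem.mpr ⟨hW0, fun b hb => by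
      by_contra hb0; exact hb0 (h b hb)⟩
    exact this ▸ hWopen
  obtain ⟨b, ⟨hbV, hbV'⟩, hb0⟩ := this
  have hbS : b ∈ S := hVS hbV
  have hwS : x⁻¹ * b ∈ S := hVS hbV'
  have hw0 : x⁻¹ * b ≠ 0 := by
    simp [hx, hb0]
  have : x = b * (x⁻¹ * b)⁻¹ := by
    field_simp
  rw [this]
  exact hmul _ hbS _ (hinv _ hwS)
end

section
/- Let K be a topological field of characteristic p > 0 that is perfect, with a Hausdorff non-discrete field topology. Suppose that for every open set Y containing 0, the image Y^p = {y^p : y ∈ Y} has nonempty interior. Then the Frobenius map x ↦ x^p is a homeomorphism of K. -/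
/-- Let `K` be a perfect topological field of characteristic `p > 0` with a Hausdorff
non-discrete field topology. Suppose that for every open set `Y` containing `0` the image of
`Y` under `y ↦ y ^ p` has nonempty interior. Then the Frobenius map `x ↦ x ^ p` is a
homeomorphism of `K`. -/
theorem frobenius_isHomeomorph
    (K : Type*) [Field K] [TopologicalSpace K] [IsTopologicalDivisionRing K] [T2Space K]
    (hnd : ¬ DiscreteTopology K)
    (p : ℕ) (hp : p.Prime) [CharP K p] [ExpChar K p] [PerfectRing K p]
    (hint : ∀ Y : Set K, IsOpen Y → (0 : K) ∈ Y →
      (interior ((fun y : K => y ^ p) '' Y)).Nonempty) :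
    IsHomeomorph (fun x : K => x ^ p) := by
  have hf : (fun x : K => x ^ p) = ⇑(frobenius K p) := by
    ext x; simp [frobenius_def]
  have hcont : Continuous (fun x : K => x ^ p) := continuous_pow p
  have hbij : Function.Bijective (fun x : K => x ^ p) := by
    rw [hf]; exact (frobeniusEquiv K p).bijective
  -- key: for open X ∋ 0, image is a neighborhood of 0
  have key : ∀ X : Set K, IsOpen X → (0 : K) ∈ X →
      (fun x : K => x ^ p) '' X ∈ nhds (0 : K) := by
    intro X hX h0X
    obtain ⟨Y, hYopen, h0Y, hYsub⟩ : ∃ Y : Set K, IsOpen Y ∧ (0:K) ∈ Y ∧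
        ∀ u ∈ Y, ∀ v ∈ Y, u - v ∈ X := by
      have : Continuous (fun q : K × K => q.1 - q.2) := continuous_sub
      have h : (fun q : K × K => q.1 - q.2) ⁻¹' X ∈ nhds ((0:K), (0:K)) := by
        apply (this.continuousAt).preimage_mem_nhds
        simpa using hX.mem_nhds h0X
      rw [nhds_prod_eq] at h
      obtain ⟨s, hs, t, ht, hst⟩ := Filter.mem_prod_iff.mp h
      obtain ⟨s', hs's, hs'o, h0s'⟩ := mem_nhds_iff.mp hs
      obtain ⟨t', ht't, ht'o, h0t'⟩ := mem_nhds_iff.mp ht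
      refine ⟨s' ∩ t', hs'o.inter ht'o, ⟨h0s', h0t'⟩, ?_⟩
      intro u hu v hv
      exact hst (Set.mk_mem_prod (hs's hu.1) (ht't hv.2))
    obtain ⟨z, hz⟩ := hint Y hYopen h0Y
    have hzY : z ∈ (fun y : K => y ^ p) '' Y := interior_subset hz
    obtain ⟨a, haY, ha⟩ := hzY
    have hsub : (fun w => w - z) '' interior ((fun y : K => y ^ p) '' Y) ⊆
        (fun x : K => x ^ p) '' X := by
      rintro _ ⟨w, hw, rfl⟩
      obtain ⟨b, hbY, rfl⟩ := interior_subset hw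
      refine ⟨b - a, hYsub b hbY a haY, ?_⟩
      simp only [← ha, sub_pow_expChar]
    refine Filter.mem_of_superset ?_ hsub
    have hopen : IsOpen ((fun w : K => w - z) '' interior ((fun y : K => y ^ p) '' Y)) := by
      have : (fun w : K => w - z) '' interior ((fun y : K => y ^ p) '' Y) =
          (fun w : K => w + z) ⁻¹' interior ((fun y : K => y ^ p) '' Y) := by
        ext u; constructor
        · rintro ⟨w, hw, rfl⟩; simpa using hw
        · intro hu; exact ⟨u + z, hu, by ring⟩
      rw [this]
      exact isOpen_interior.preimage (continuous_add_right z)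
    exact hopen.mem_nhds ⟨z, hz, sub_self z⟩
  have hopenmap : IsOpenMap (fun x : K => x ^ p) := by
    intro U hU
    rw [isOpen_iff_mem_nhds]
    rintro _ ⟨x, hxU, rfl⟩
    have hX : IsOpen ((fun y : K => y + x) ⁻¹' U) := hU.preimage (continuous_add_right x)
    have h0X : (0:K) ∈ (fun y : K => y + x) ⁻¹' U := by simpa using hxU
    have h := key _ hX h0X
    have : (fun w : K => w + x ^ p) '' ((fun x : K => x ^ p) '' ((fun y : K => y + x) ⁻¹' U)) ⊆
        (fun x : K => x ^ p) '' U := by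
      rintro _ ⟨_, ⟨y, hy, rfl⟩, rfl⟩
      exact ⟨y + x, hy, by simp only []; rw [add_pow_expChar]⟩
    refine Filter.mem_of_superset ?_ this
    have := (Homeomorph.addRight ((x:K) ^ p)).isOpenMap
    -- translate neighborhood
    have h2 : (fun w : K => w + x ^ p) '' ((fun x : K => x ^ p) '' ((fun y : K => y + x) ⁻¹' U))
        ∈ nhds ((0:K) + x ^ p) := by
      exact (Homeomorph.addRight ((x:K)^p)).isOpenMap.image_mem_nhds h
    simpa using h2
  exact ⟨hcont, hopenmap, hbij⟩
end
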